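/- If the sequence (y_n) is the invert transform of (x_n), then for all 1 ≤ k ≤ n: k!·B_{n,k}(1!·y_1, 2!·y_2, 3!·y_3, ...) = Σ_{i=k}^{n} C(i-1, k-1) · i! · B_{n,i}(1!·x_1, 2!·x_2, 3!·x_3, ...). -/

import Mathlib

/-- The partial (exponential) Bell polynomials, defined by `B 0 0 = 1`, `B n 0 = 0` for
`n ≥ 1`, and the recurrence `k * B n k = ∑_{i=1}^{n-k+1} C(n,i) * x i * B (n-i) (k-1)`. -/
def bell (x : ℕ → ℚ) : ℕ → ℕ → ℚ
  | 0, 0 => 1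
  | _ + 1, 0 => 0
  | n, k + 1 =>
    ((k : ℚ) + 1)⁻¹ * ∑ i ∈ Finset.Icc 1 (n - k), (n.choose i : ℚ) * x i * bell x (n - i) k

open PowerSeries Finset

noncomputable def ser (z : ℕ → ℚ) : PowerSeries ℚ :=
  PowerSeries.mk (fun i => if i = 0 then 0 else z i)

lemma ser_const (z : ℕ → ℚ) : constantCoeff (ser z) = 0 := by
  simp [ser, ← coeff_zero_eq_constantCoeff]

lemma ser_pow_vanish (z : ℕ → ℚ) (k m : ℕ) (h : m < k) :
    coeff m ((ser z) ^ k) = 0 := by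
  have h1 : (PowerSeries.X : ℚ⟦X⟧) ^ k ∣ (ser z) ^ k :=
    pow_dvd_pow_of_dvd (X_dvd_iff.2 (ser_const z)) k
  exact X_pow_dvd_iff.1 h1 m h

lemma coeff_ser_pow (z : ℕ → ℚ) : ∀ k n, coeff n ((ser z) ^ k) =
    ((n.factorial : ℚ))⁻¹ * (k.factorial : ℚ) * bell (fun i => (i.factorial : ℚ) * z i) n k
  | 0, n => by
    cases n with
    | zero => simp [bell]
    | succ m => simp [bell, coeff_one]
  | k + 1, n => by
    have hrec : bell (fun i => (i.factorial : ℚ) * z i) n (k + 1) =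
        ((k : ℚ) + 1)⁻¹ * ∑ i ∈ Finset.Icc 1 (n - k),
          (n.choose i : ℚ) * ((i.factorial : ℚ) * z i) *
            bell (fun j => (j.factorial : ℚ) * z j) (n - i) k := by
      cases n with
      | zero => rfl
      | succ m => rfl
    rw [pow_succ', coeff_mul, Finset.Nat.sum_antidiagonal_eq_sum_range_succ_mk]
    have hsub : Finset.Icc 1 (n - k) ⊆ Finset.range (n + 1) := by
      intro i hi
      simp only [Finset.mem_Icc] at hi
      simp only [Finset.mem_range]
      omega
    rw [← Finset.sum_subset hsub ?foo]
    case foo =>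
      intro i hi hni
      simp only [Finset.mem_range] at hi
      simp only [Finset.mem_Icc, not_and, not_le] at hni
      rcases Nat.eq_zero_or_pos i with h0 | h1
      · simp [ser, h0]
      · have : n - i < k := by
          have := hni h1
          omega
        rw [ser_pow_vanish z k _ this, mul_zero]
    rw [hrec]
    rw [Finset.mul_sum, Finset.mul_sum]
    apply Finset.sum_congr rfl
    intro i hi
    simp only [Finset.mem_Icc] at hi
    have hin : i ≤ n := by omega
    rw [coeff_ser_pow z k (n - i)]
    have hfact : (n.choose i : ℚ) * (i.factorial : ℚ) * ((n - i).factorial : ℚ) = n.factorial := by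
      rw [← Nat.cast_mul, ← Nat.cast_mul, Nat.choose_mul_factorial_mul_factorial hin]
    have hser : coeff i (ser z) = z i := by
      simp [ser]
      intro h; omega
    have hn0 : (n.factorial : ℚ) ≠ 0 := Nat.cast_ne_zero.2 (Nat.factorial_ne_zero n)
    have hni0 : ((n - i).factorial : ℚ) ≠ 0 := Nat.cast_ne_zero.2 (Nat.factorial_ne_zero _)
    have hk1 : ((k + 1).factorial : ℚ) = ((k : ℚ) + 1) * (k.factorial : ℚ) := by
      push_cast [Nat.factorial_succ]; ring
    rw [hser, hk1]
    field_simp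
    ring_nf
    rw [← hfact]
    ring


lemma icc_insert (a b : ℕ) (h : a ≤ b) :
    Finset.Icc a b = insert a (Finset.Icc (a + 1) b) := by
  ext j; simp only [Finset.mem_Icc, Finset.mem_insert]; omega

lemma sum_shift (a b : ℕ) (f : ℕ → PowerSeries ℚ) :
    ∑ i ∈ Finset.Icc a b, f (i + 1) = ∑ j ∈ Finset.Icc (a + 1) (b + 1), f j := by
  rw [← Finset.map_add_right_Icc a b 1, Finset.sum_map]
  rfl

lemma pascal' (k j : ℕ) (hk : 1 ≤ k) (hj : k + 1 ≤ j) :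
    (j - 2).choose (k - 1) + (j - 2).choose k = (j - 1).choose k := by
  obtain ⟨a, rfl⟩ : ∃ a, k = a + 1 := ⟨k - 1, by omega⟩
  obtain ⟨b, rfl⟩ : ∃ b, j = b + 2 := ⟨j - 2, by omega⟩
  simp only [Nat.add_sub_cancel, show b + 2 - 2 = b by omega, show b + 2 - 1 = b + 1 by omega]
  exact (Nat.choose_succ_succ b a).symm

lemma key (X' Y : PowerSeries ℚ) (hY : constantCoeff Y = 0)
    (hYX : Y = X' + X' * Y) :
    ∀ k, 1 ≤ k → ∀ m, (PowerSeries.X : ℚ⟦X⟧) ^ (m + 1) ∣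
      Y ^ k - ∑ i ∈ Finset.Icc k m, PowerSeries.C (((i - 1).choose (k - 1) : ℕ) : ℚ) * X' ^ i := by
  have hXc : constantCoeff X' = 0 := by
    have := congrArg (constantCoeff) hYX
    simp [hY] at this
    exact this.symm
  have hXd : (PowerSeries.X : ℚ⟦X⟧) ∣ X' := X_dvd_iff.2 hXc
  have hYd : (PowerSeries.X : ℚ⟦X⟧) ∣ Y := X_dvd_iff.2 hY
  intro k hk
  induction k, hk using Nat.le_induction with
  | base =>
    intro m
    induction m with
    | zero => simpa using hYd
    | succ m ihm =>
      have sum1 : X' * ∑ i ∈ Finset.Icc 1 m, PowerSeries.C (((i - 1).choose 0 : ℕ) : ℚ) * X' ^ i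
          = ∑ j ∈ Finset.Icc 2 (m + 1), PowerSeries.C (((j - 1).choose 0 : ℕ) : ℚ) * X' ^ j := by
        rw [Finset.mul_sum, ← sum_shift 1 m (fun j => PowerSeries.C (((j - 1).choose 0 : ℕ) : ℚ) * X' ^ j)]
        apply Finset.sum_congr rfl
        intro i _
        simp only [Nat.choose_zero_right, Nat.cast_one, map_one, one_mul]
        rw [pow_succ']
      have sum2 : ∑ i ∈ Finset.Icc 1 (m + 1), PowerSeries.C (((i - 1).choose 0 : ℕ) : ℚ) * X' ^ i
          = X' + ∑ j ∈ Finset.Icc 2 (m + 1), PowerSeries.C (((j - 1).choose 0 : ℕ) : ℚ) * X' ^ j := by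
        rw [icc_insert 1 (m + 1) (by omega), Finset.sum_insert (by simp)]
        simp
      have step : Y ^ 1 - ∑ i ∈ Finset.Icc 1 (m + 1), PowerSeries.C (((i - 1).choose 0 : ℕ) : ℚ) * X' ^ i
          = X' * (Y ^ 1 - ∑ i ∈ Finset.Icc 1 m, PowerSeries.C (((i - 1).choose 0 : ℕ) : ℚ) * X' ^ i) := by
        rw [mul_sub, sum1, sum2, pow_one]
        nth_rewrite 1 [hYX]
        ring
      rw [step, pow_succ']
      exact mul_dvd_mul hXd ihm
  | succ k hk1 ihk =>
    intro m
    induction m with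
    | zero =>
      rw [Finset.Icc_eq_empty_of_lt (by omega : (0:ℕ) < k + 1), Finset.sum_empty, sub_zero]
      simpa using dvd_pow hYd (by omega : k + 1 ≠ 0)
    | succ m ihm =>
      have hkk : k + 1 - 1 = k := by omega
      simp only [hkk] at ihm ⊢
      by_cases hmk : k ≤ m
      case neg =>
        rw [Finset.Icc_eq_empty_of_lt (by omega : m + 1 < k + 1), Finset.sum_empty, sub_zero]
        exact dvd_trans (pow_dvd_pow _ (by omega : m + 1 + 1 ≤ k + 1))
          (pow_dvd_pow_of_dvd hYd (k + 1))
      have hYk1 : Y ^ (k + 1) = X' * Y ^ k + X' * Y ^ (k + 1) := by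
        rw [pow_succ]
        nth_rewrite 2 [hYX]
        ring
      have sumA : X' * ∑ i ∈ Finset.Icc k m, PowerSeries.C (((i - 1).choose (k - 1) : ℕ) : ℚ) * X' ^ i
          = ∑ j ∈ Finset.Icc (k + 1) (m + 1), PowerSeries.C (((j - 2).choose (k - 1) : ℕ) : ℚ) * X' ^ j := by
        rw [Finset.mul_sum, ← sum_shift k m (fun j => PowerSeries.C (((j - 2).choose (k - 1) : ℕ) : ℚ) * X' ^ j)]
        apply Finset.sum_congr rfl
        intro i hi
        simp only [Finset.mem_Icc] at hi
        rw [show i + 1 - 2 = i - 1 by omega, pow_succ']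
        ring
      have sumB : X' * ∑ i ∈ Finset.Icc (k + 1) m, PowerSeries.C (((i - 1).choose k : ℕ) : ℚ) * X' ^ i
          = ∑ j ∈ Finset.Icc (k + 1) (m + 1), PowerSeries.C (((j - 2).choose k : ℕ) : ℚ) * X' ^ j := by
        rw [Finset.mul_sum]
        rw [icc_insert (k + 1) (m + 1) (by omega), Finset.sum_insert (by simp)]
        rw [show ((k + 1 - 2).choose k : ℚ) = 0 by
          rw [Nat.choose_eq_zero_of_lt (by omega)]; simp]
        simp only [map_zero, zero_mul, zero_add]
        rw [← sum_shift (k + 1) m (fun j => PowerSeries.C (((j - 2).choose k : ℕ) : ℚ) * X' ^ j)]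
        apply Finset.sum_congr rfl
        intro i hi
        simp only [Finset.mem_Icc] at hi
        rw [show i + 1 - 2 = i - 1 by omega, pow_succ']
        ring
      have main : (X' * ∑ i ∈ Finset.Icc k m, PowerSeries.C (((i - 1).choose (k - 1) : ℕ) : ℚ) * X' ^ i)
          + (X' * ∑ i ∈ Finset.Icc (k + 1) m, PowerSeries.C (((i - 1).choose k : ℕ) : ℚ) * X' ^ i)
          = ∑ j ∈ Finset.Icc (k + 1) (m + 1), PowerSeries.C (((j - 1).choose k : ℕ) : ℚ) * X' ^ j := by
        rw [sumA, sumB, ← Finset.sum_add_distrib]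
        apply Finset.sum_congr rfl
        intro j hj
        simp only [Finset.mem_Icc] at hj
        rw [← add_mul, ← map_add, ← Nat.cast_add, pascal' k j hk1 hj.1]
      have decomp : Y ^ (k + 1) - ∑ i ∈ Finset.Icc (k + 1) (m + 1), PowerSeries.C (((i - 1).choose k : ℕ) : ℚ) * X' ^ i
          = X' * (Y ^ k - ∑ i ∈ Finset.Icc k m, PowerSeries.C (((i - 1).choose (k - 1) : ℕ) : ℚ) * X' ^ i)
          + X' * (Y ^ (k + 1) - ∑ i ∈ Finset.Icc (k + 1) m, PowerSeries.C (((i - 1).choose k : ℕ) : ℚ) * X' ^ i) := by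
        linear_combination hYk1 + main
      rw [decomp, pow_succ']
      exact dvd_add (mul_dvd_mul hXd (ihk m)) (mul_dvd_mul hXd ihm)


lemma ser_invert (x y : ℕ → ℚ)
    (hy : ∀ n, 1 ≤ n → y n = x n + ∑ i ∈ Finset.Ico 1 n, x i * y (n - i)) :
    ser y = ser x + ser x * ser y := by
  ext n
  rw [map_add, coeff_mul, Finset.Nat.sum_antidiagonal_eq_sum_range_succ_mk]
  cases n with
  | zero => simp [ser]
  | succ m =>
    have hsub : Finset.Ico 1 (m + 1) ⊆ Finset.range (m + 2) := by
      intro i hi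
      simp only [Finset.mem_Ico] at hi
      simp only [Finset.mem_range]
      omega
    rw [← Finset.sum_subset hsub ?bar]
    case bar =>
      intro i hi hni
      simp only [Finset.mem_range] at hi
      simp only [Finset.mem_Ico, not_and, not_lt] at hni
      rcases Nat.eq_zero_or_pos i with h0 | h1
      · simp [ser, h0]
      · have : i = m + 1 := by
          have := hni h1
          omega
        simp [ser, this]
    have : ∀ i ∈ Finset.Ico 1 (m + 1),
        coeff i (ser x) * coeff (m + 1 - i) (ser y) = x i * y (m + 1 - i) := by
      intro i hi
      simp only [Finset.mem_Ico] at hi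
      simp only [ser, coeff_mk]
      rw [if_neg (by omega), if_neg (by omega)]
    rw [Finset.sum_congr rfl this]
    simp only [ser, coeff_mk, if_neg (by omega : ¬ m + 1 = 0)]
    exact hy (m + 1) (by omega)

theorem stmt19 (x y : ℕ → ℚ)
    (hy : ∀ n, 1 ≤ n → y n = x n + ∑ i ∈ Finset.Ico 1 n, x i * y (n - i))
    (n k : ℕ) (hk : 1 ≤ k) (hkn : k ≤ n) :
    (k.factorial : ℚ) * bell (fun i => (i.factorial : ℚ) * y i) n k =
      ∑ i ∈ Finset.Icc k n,
        ((i - 1).choose (k - 1) : ℚ) * (i.factorial : ℚ) *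
          bell (fun j => (j.factorial : ℚ) * x j) n i := by
  have hkey := key (ser x) (ser y) (ser_const y) (ser_invert x y hy) k hk n
  have h0 := X_pow_dvd_iff.1 hkey n (by omega : n < n + 1)
  rw [map_sub, sub_eq_zero, map_sum] at h0
  have hcoeff : coeff n ((ser y) ^ k) =
      ∑ i ∈ Finset.Icc k n, ((i - 1).choose (k - 1) : ℚ) * coeff n ((ser x) ^ i) := by
    rw [h0]
    apply Finset.sum_congr rfl
    intro i _
    rw [coeff_C_mul]
  have hn0 : (n.factorial : ℚ) ≠ 0 := Nat.cast_ne_zero.2 (Nat.factorial_ne_zero n)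
  have lhs : (k.factorial : ℚ) * bell (fun i => (i.factorial : ℚ) * y i) n k =
      (n.factorial : ℚ) * coeff n ((ser y) ^ k) := by
    rw [coeff_ser_pow]
    field_simp
  rw [lhs, hcoeff, Finset.mul_sum]
  apply Finset.sum_congr rfl
  intro i _
  rw [coeff_ser_pow]
  field_simp
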